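/- Let F be a field of characteristic p > 0 and let X be an n×n matrix over F. Since ad X := (Y ↦ XY − YX) maps scalar matrices to 0, it induces a linear endomorphism of the quotient space M_n(F)/F·1. This induced endomorphism is nilpotent if and only if there exist an integer k ≥ 0 and a ∈ F such that X^{pᵏ} = a·1. -/

import Mathlib

/-- Let `F` be a field of characteristic `p > 0` and `X` an `n×n` matrix over `F`.  Since
`ad X : Y ↦ X*Y − Y*X` kills scalar matrices, it induces a linear endomorphism `g` of the
quotient space `M_n(F)/F·1`.  This induced endomorphism is nilpotent if and only if there
exist `k ≥ 0` and `a ∈ F` such that `X^{pᵏ} = a • 1`. -/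
theorem induced_ad_nilpotent_iff_pow_scalar
    {F : Type*} [Field F] (p : ℕ) (hp : 0 < p) [CharP F p]
    (n : ℕ) (X : Matrix (Fin n) (Fin n) F)
    (g : (Matrix (Fin n) (Fin n) F ⧸ Submodule.span F {(1 : Matrix (Fin n) (Fin n) F)}) →ₗ[F]
         (Matrix (Fin n) (Fin n) F ⧸ Submodule.span F {(1 : Matrix (Fin n) (Fin n) F)}))
    (hg : ∀ Y : Matrix (Fin n) (Fin n) F,
      g (Submodule.Quotient.mk Y) = Submodule.Quotient.mk (X * Y - Y * X)) :
    IsNilpotent g ↔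
      ∃ (k : ℕ) (a : F), X ^ p ^ k = a • (1 : Matrix (Fin n) (Fin n) F) := by
  -- trivial case n = 0
  rcases Nat.eq_zero_or_pos n with rfl | hn
  · constructor
    · intro _
      refine ⟨0, 0, ?_⟩
      ext i j
      exact i.elim0
    · intro _
      refine ⟨1, LinearMap.ext fun y => ?_⟩
      obtain ⟨Y, rfl⟩ := Submodule.Quotient.mk_surjective _ y
      rw [pow_one, hg, LinearMap.zero_apply]
      have : X * Y - Y * X = 0 := by ext i j; exact i.elim0
      rw [this, Submodule.Quotient.mk_zero]
  haveI : NeZero p := ⟨hp.ne'⟩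
  have hprime : Fact p.Prime := CharP.char_is_prime_of_pos F p
  haveI : CharP (Matrix (Fin n) (Fin n) F →ₗ[F] Matrix (Fin n) (Fin n) F) p :=
    Module.charP_end ⟨(1 : Matrix (Fin n) (Fin n) F), (Submodule.eq_bot_iff _).mpr fun r hr => by
      rw [Ideal.mem_torsionOf_iff] at hr
      have := congrFun (congrFun hr ⟨0, hn⟩) ⟨0, hn⟩
      simpa using this⟩
  let D : Matrix (Fin n) (Fin n) F →ₗ[F] Matrix (Fin n) (Fin n) F :=
    LinearMap.mulLeft F X - LinearMap.mulRight F X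
  have hDapp : ∀ Y : Matrix (Fin n) (Fin n) F, D Y = X * Y - Y * X := fun Y => rfl
  -- g^m on quotient equals D^m lifted
  have key : ∀ (m : ℕ) (Y : Matrix (Fin n) (Fin n) F),
      (g ^ m) (Submodule.Quotient.mk Y) = Submodule.Quotient.mk ((D ^ m) Y) := by
    intro m
    induction m with
    | zero => intro Y; simp
    | succ m ih =>
      intro Y
      rw [pow_succ', pow_succ', Module.End.mul_apply, Module.End.mul_apply, ih, hg, hDapp]
  -- D ^ (p ^ k) = ad (X ^ (p ^ k))
  have hDpow : ∀ k : ℕ,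
      D ^ p ^ k = LinearMap.mulLeft F (X ^ p ^ k) - LinearMap.mulRight F (X ^ p ^ k) := by
    intro k
    show (LinearMap.mulLeft F X - LinearMap.mulRight F X) ^ p ^ k = _
    rw [sub_pow_char_pow_of_commute p k (LinearMap.commute_mulLeft_right X X),
      LinearMap.pow_mulLeft, LinearMap.pow_mulRight]
  constructor
  · rintro ⟨m, hm⟩
    -- D^(m+1) = 0
    have hD1 : D ^ (m + 1) = 0 := by
      apply LinearMap.ext
      intro Y
      have hmem : (D ^ m) Y ∈ Submodule.span F {(1 : Matrix (Fin n) (Fin n) F)} := by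
        rw [← Submodule.Quotient.mk_eq_zero, ← key, hm, LinearMap.zero_apply]
      rw [Submodule.mem_span_singleton] at hmem
      obtain ⟨a, ha⟩ := hmem
      rw [pow_succ', Module.End.mul_apply, ← ha, LinearMap.zero_apply, map_smul, hDapp]
      simp
    -- choose k with p ^ k ≥ m + 1
    obtain ⟨k, hk⟩ : ∃ k : ℕ, m + 1 ≤ p ^ k :=
      ⟨m + 1, (Nat.lt_pow_self (n := m + 1) hprime.out.one_lt).le⟩
    have hDk : D ^ p ^ k = 0 := by
      obtain ⟨c, hc⟩ := Nat.exists_eq_add_of_le hk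
      rw [hc, pow_add, hD1, zero_mul]
    -- X ^ p ^ k commutes with everything
    have hcomm : ∀ Y : Matrix (Fin n) (Fin n) F, X ^ p ^ k * Y = Y * X ^ p ^ k := by
      intro Y
      have h0 : (LinearMap.mulLeft F (X ^ p ^ k) - LinearMap.mulRight F (X ^ p ^ k)) Y = 0 := by
        rw [← hDpow k, hDk, LinearMap.zero_apply]
      simpa [sub_eq_zero] using h0
    obtain ⟨a, ha⟩ := Matrix.mem_range_scalar_of_commute_single
      (M := X ^ p ^ k) (fun i j _ => (hcomm _).symm)
    refine ⟨k, a, ?_⟩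
    rw [← ha, Matrix.scalar_apply]
    ext i j
    simp [Matrix.one_apply, Matrix.diagonal_apply]
  · rintro ⟨k, a, ha⟩
    refine ⟨p ^ k, LinearMap.ext fun y => ?_⟩
    obtain ⟨Y, rfl⟩ := Submodule.Quotient.mk_surjective _ y
    rw [key, LinearMap.zero_apply]
    have : (D ^ p ^ k) Y = 0 := by
      rw [hDpow k, ha]
      simp [Matrix.smul_mul, Matrix.mul_smul]
    rw [this, Submodule.Quotient.mk_zero]
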